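/- If Null(Φ) ∩ 𝒦 ∩ 𝒫 = {0}, then the set of minimizers of the problem min_{Θ ∈ 𝒦 ∩ 𝒫} ‖Y − ΦΘ‖_F² is a bounded subset of ℝ^{n×L}: there exists C > 0 such that every X ∈ 𝒦 ∩ 𝒫 satisfying ‖Y − ΦX‖_F ≤ ‖Y − ΦΘ‖_F for all Θ ∈ 𝒦 ∩ 𝒫 has ‖X‖_F ≤ C. -/

import Mathlib

/-- Frobenius norm of a real matrix. -/
noncomputable def frob {a b : ℕ} (A : Matrix (Fin a) (Fin b) ℝ) : ℝ :=
  Real.sqrt (∑ i, ∑ j, (A i j) ^ 2)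

/-- The set of a×b matrices whose every column has at most k nonzero entries. -/
def colSparse (a b k : ℕ) : Set (Matrix (Fin a) (Fin b) ℝ) :=
  {Θ | ∀ l, ({i | Θ i l ≠ 0} : Set (Fin a)).ncard ≤ k}

/-- The set of a×b matrices having at most p nonzero rows. -/
def rowSparse (a b p : ℕ) : Set (Matrix (Fin a) (Fin b) ℝ) :=
  {Θ | ({i | ∃ l, Θ i l ≠ 0} : Set (Fin a)).ncard ≤ p}

noncomputable def eu {a b : ℕ} : Matrix (Fin a) (Fin b) ℝ →ₗ[ℝ] EuclideanSpace ℝ (Fin a × Fin b) where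
  toFun A := (WithLp.equiv 2 _).symm (fun p => A p.1 p.2)
  map_add' := by intros; rfl
  map_smul' := by intros; rfl

lemma frob_eq_norm {a b : ℕ} (A : Matrix (Fin a) (Fin b) ℝ) : frob A = ‖eu A‖ := by
  rw [EuclideanSpace.norm_eq, frob]
  congr 1
  rw [Fintype.sum_prod_type]
  simp [eu, sq_abs]

lemma frob_nonneg {a b : ℕ} (A : Matrix (Fin a) (Fin b) ℝ) : 0 ≤ frob A :=
  Real.sqrt_nonneg _

lemma eu_inj {a b : ℕ} : Function.Injective (eu (a := a) (b := b)) := by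
  intro A B h
  ext i j
  have := congrFun (congrArg (WithLp.equiv 2 (Fin a × Fin b → ℝ)) h) (i, j)
  simpa [eu] using this

lemma frob_eq_zero {a b : ℕ} {A : Matrix (Fin a) (Fin b) ℝ} (h : frob A = 0) : A = 0 := by
  rw [frob_eq_norm] at h
  have : eu A = 0 := norm_eq_zero.mp h
  exact eu_inj (by simpa using this)

lemma frob_smul {a b : ℕ} (c : ℝ) (A : Matrix (Fin a) (Fin b) ℝ) :
    frob (c • A) = |c| * frob A := by
  rw [frob_eq_norm, frob_eq_norm, map_smul, norm_smul, Real.norm_eq_abs]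

lemma frob_continuous {a b : ℕ} : Continuous (frob (a := a) (b := b)) := by
  have : Continuous (eu (a := a) (b := b)) := eu.continuous_of_finiteDimensional
  simpa [funext frob_eq_norm, Function.comp_def] using continuous_norm.comp this

lemma frob_sub_le {a b : ℕ} (A B C : Matrix (Fin a) (Fin b) ℝ) :
    frob (A - C) ≤ frob (A - B) + frob (B - C) := by
  rw [frob_eq_norm, frob_eq_norm, frob_eq_norm, map_sub, map_sub, map_sub]
  exact norm_sub_le_norm_sub_add_norm_sub _ _ _

lemma isClosed_colSparse (a b k : ℕ) : IsClosed (colSparse a b k) := by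
  rw [← isOpen_compl_iff]
  rw [isOpen_iff_mem_nhds]
  intro Θ hΘ
  simp only [Set.mem_compl_iff, colSparse, Set.mem_setOf_eq, not_forall, not_le] at hΘ
  obtain ⟨l, hl⟩ := hΘ
  obtain ⟨t, hts, htc⟩ := Set.exists_subset_card_eq hl
  have htfin : t.Finite := Set.Finite.subset (Set.toFinite _) hts
  have : {Ψ : Matrix (Fin a) (Fin b) ℝ | ∀ i ∈ t, Ψ i l ≠ 0} ∈ nhds Θ := by
    have hopen : IsOpen {Ψ : Matrix (Fin a) (Fin b) ℝ | ∀ i ∈ t, Ψ i l ≠ 0} := by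
      have : {Ψ : Matrix (Fin a) (Fin b) ℝ | ∀ i ∈ t, Ψ i l ≠ 0}
          = ⋂ i ∈ htfin.toFinset, {Ψ : Matrix (Fin a) (Fin b) ℝ | Ψ i l ≠ 0} := by
        ext Ψ; simp [htfin.mem_toFinset]
      rw [this]
      refine isOpen_biInter_finset fun i _ => ?_
      exact isOpen_ne.preimage ((continuous_apply l).comp (continuous_apply i))
    exact hopen.mem_nhds (fun i hi => hts hi)
  refine Filter.mem_of_superset this ?_
  intro Ψ hΨ
  simp only [Set.mem_compl_iff, colSparse, Set.mem_setOf_eq, not_forall, not_le]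
  refine ⟨l, lt_of_lt_of_le ?_ (Set.ncard_le_ncard (fun i hi => hΨ i hi) (Set.toFinite _))⟩
  rw [htc]; exact lt_add_one k

lemma isClosed_rowSparse (a b p : ℕ) : IsClosed (rowSparse a b p) := by
  rw [← isOpen_compl_iff, isOpen_iff_mem_nhds]
  intro Θ hΘ
  simp only [Set.mem_compl_iff, rowSparse, Set.mem_setOf_eq, not_le] at hΘ
  obtain ⟨t, hts, htc⟩ := Set.exists_subset_card_eq hΘ
  have htfin : t.Finite := Set.Finite.subset (Set.toFinite _) hts
  choose f hf using fun (i : {i // i ∈ t}) => hts i.2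
  have : {Ψ : Matrix (Fin a) (Fin b) ℝ | ∀ i : {i // i ∈ t}, Ψ i.1 (f i) ≠ 0} ∈ nhds Θ := by
    have hopen : IsOpen {Ψ : Matrix (Fin a) (Fin b) ℝ | ∀ i : {i // i ∈ t}, Ψ i.1 (f i) ≠ 0} := by
      have : {Ψ : Matrix (Fin a) (Fin b) ℝ | ∀ i : {i // i ∈ t}, Ψ i.1 (f i) ≠ 0}
          = ⋂ i : {i // i ∈ t}, {Ψ : Matrix (Fin a) (Fin b) ℝ | Ψ i.1 (f i) ≠ 0} := by
        ext Ψ; simp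
      rw [this]
      have : Finite {i // i ∈ t} := htfin.to_subtype
      refine isOpen_iInter_of_finite fun i => ?_
      exact isOpen_ne.preimage ((continuous_apply (f i)).comp (continuous_apply i.1))
    exact hopen.mem_nhds (fun i => hf i)
  refine Filter.mem_of_superset this ?_
  intro Ψ hΨ
  simp only [Set.mem_compl_iff, rowSparse, Set.mem_setOf_eq, not_le]
  have hsub : t ⊆ {i | ∃ l, Ψ i l ≠ 0} := fun i hi => ⟨f ⟨i, hi⟩, hΨ ⟨i, hi⟩⟩
  refine lt_of_lt_of_le ?_ (Set.ncard_le_ncard hsub (Set.toFinite _))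
  rw [htc]; exact lt_add_one p

lemma smul_mem_colSparse {a b k : ℕ} {c : ℝ} {Θ : Matrix (Fin a) (Fin b) ℝ}
    (h : Θ ∈ colSparse a b k) : c • Θ ∈ colSparse a b k := by
  intro l
  refine le_trans (Set.ncard_le_ncard ?_ (Set.toFinite _)) (h l)
  intro i hi
  simp only [Set.mem_setOf_eq, Matrix.smul_apply, smul_eq_mul] at hi ⊢
  exact fun h0 => hi (by rw [h0, mul_zero])

lemma smul_mem_rowSparse {a b p : ℕ} {c : ℝ} {Θ : Matrix (Fin a) (Fin b) ℝ}
    (h : Θ ∈ rowSparse a b p) : c • Θ ∈ rowSparse a b p := by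
  refine le_trans (Set.ncard_le_ncard ?_ (Set.toFinite _)) h
  rintro i ⟨l, hl⟩
  refine ⟨l, ?_⟩
  simp only [Matrix.smul_apply, smul_eq_mul] at hl
  exact fun h0 => hl (by rw [h0, mul_zero])

lemma entry_le_frob {a b : ℕ} (A : Matrix (Fin a) (Fin b) ℝ) (i : Fin a) (j : Fin b) :
    |A i j| ≤ frob A := by
  rw [← Real.sqrt_sq_eq_abs, frob]
  apply Real.sqrt_le_sqrt
  calc (A i j) ^ 2 ≤ ∑ j', (A i j') ^ 2 :=
        Finset.single_le_sum (f := fun j' => (A i j') ^ 2)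
          (fun _ _ => sq_nonneg _) (Finset.mem_univ j)
    _ ≤ ∑ i', ∑ j', (A i' j') ^ 2 :=
        Finset.single_le_sum (f := fun i' => ∑ j', (A i' j') ^ 2)
          (fun _ _ => Finset.sum_nonneg fun _ _ => sq_nonneg _) (Finset.mem_univ i)

attribute [local instance] Matrix.normedAddCommGroup Matrix.normedSpace

set_option maxHeartbeats 2000000 in
theorem stmt_1 (m n L k p : ℕ) (hm : 0 < m) (hn : 0 < n) (hL : 0 < L)
    (hk : 0 < k) (hp : 0 < p)
    (Φ : Matrix (Fin m) (Fin n) ℝ) (Y : Matrix (Fin m) (Fin L) ℝ)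
    (hnull : {Θ : Matrix (Fin n) (Fin L) ℝ | Φ * Θ = 0} ∩ colSparse n L k ∩ rowSparse n L p
      = {0}) :
    ∃ C : ℝ, 0 < C ∧
      ∀ X ∈ colSparse n L k ∩ rowSparse n L p,
        (∀ Θ ∈ colSparse n L k ∩ rowSparse n L p, frob (Y - Φ * X) ≤ frob (Y - Φ * Θ)) →
          frob X ≤ C := by
  set S := colSparse n L k ∩ rowSparse n L p with hS
  have hzero : (0 : Matrix (Fin n) (Fin L) ℝ) ∈ S := by
    constructor
    · intro l; simp [colSparse]
    · simp [rowSparse]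
  have hnull' : ∀ X ∈ S, Φ * X = 0 → X = 0 := by
    intro X hX h0
    have : X ∈ ({Θ : Matrix (Fin n) (Fin L) ℝ | Φ * Θ = 0} ∩ colSparse n L k ∩ rowSparse n L p) :=
      ⟨⟨h0, hX.1⟩, hX.2⟩
    rw [hnull] at this
    exact this
  -- key: ∃ δ > 0, ∀ X ∈ S, δ * frob X ≤ frob (Φ * X)
  have key : ∃ δ : ℝ, 0 < δ ∧ ∀ X ∈ S, δ * frob X ≤ frob (Φ * X) := by
    set K := S ∩ {X : Matrix (Fin n) (Fin L) ℝ | frob X = 1} with hK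
    by_cases hne : K.Nonempty
    · have hKclosed : IsClosed K :=
        (((isClosed_colSparse n L k).inter (isClosed_rowSparse n L p)).inter
          (isClosed_eq frob_continuous continuous_const))
      have hKbdd : Bornology.IsBounded K := by
        refine Metric.isBounded_iff_subset_closedBall 0 |>.mpr ⟨1, fun X hX => ?_⟩
        rw [Metric.mem_closedBall, dist_zero_right]
        have : ‖X‖ ≤ 1 := by
          rw [show (1:ℝ) = frob X from hX.2.symm]
          refine (pi_norm_le_iff_of_nonneg (frob_nonneg X)).mpr fun i => ?_
          refine (pi_norm_le_iff_of_nonneg (frob_nonneg X)).mpr fun j => ?_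
          simpa [Real.norm_eq_abs] using entry_le_frob X i j
        exact this
      have hKcompact : IsCompact K :=
        Metric.isCompact_iff_isClosed_bounded.mpr ⟨hKclosed, hKbdd⟩
      have hcont : Continuous fun X : Matrix (Fin n) (Fin L) ℝ => frob (Φ * X) := by
        have hmul : Continuous fun X : Matrix (Fin n) (Fin L) ℝ => Φ * X := by
          exact LinearMap.continuous_of_finiteDimensional
            (({ toFun := fun X => Φ * X,
                map_add' := fun A B => Matrix.mul_add Φ A B,
                map_smul' := fun c A => Matrix.mul_smul Φ c A } :
              Matrix (Fin n) (Fin L) ℝ →ₗ[ℝ] Matrix (Fin m) (Fin L) ℝ))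
        exact frob_continuous.comp hmul
      obtain ⟨X₀, hX₀K, hX₀min⟩ := hKcompact.exists_isMinOn hne hcont.continuousOn
      set δ := frob (Φ * X₀) with hδ
      have hδpos : 0 < δ := by
        rcases lt_or_eq_of_le (frob_nonneg (Φ * X₀)) with h | h
        · exact h
        · exfalso
          have : Φ * X₀ = 0 := frob_eq_zero h.symm
          have hX0 : X₀ = 0 := hnull' X₀ hX₀K.1 this
          have h01 : frob X₀ = 1 := hX₀K.2
          rw [hX0] at h01
          simp [frob] at h01
      refine ⟨δ, hδpos, fun X hX => ?_⟩
      by_cases hX0 : X = 0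
      · subst hX0
        have : frob (0 : Matrix (Fin n) (Fin L) ℝ) = 0 := by simp [frob]
        rw [this, mul_zero]
        exact frob_nonneg _
      · set c := frob X with hc
        have hcpos : 0 < c := by
          rcases lt_or_eq_of_le (frob_nonneg X) with h | h
          · exact h
          · exact absurd (frob_eq_zero h.symm) hX0
        have hmem : c⁻¹ • X ∈ K := by
          refine ⟨⟨smul_mem_colSparse hX.1, smul_mem_rowSparse hX.2⟩, ?_⟩
          simp only [Set.mem_setOf_eq, frob_smul, abs_inv, abs_of_pos hcpos]
          field_simp
          exact hc.symm
        have := hX₀min hmem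
        simp only [Set.mem_setOf_eq] at this
        rw [Matrix.mul_smul, frob_smul, abs_inv, abs_of_pos hcpos] at this
        calc δ * c ≤ (c⁻¹ * frob (Φ * X)) * c := by
              apply mul_le_mul_of_nonneg_right this hcpos.le
          _ = frob (Φ * X) := by field_simp
    · -- K empty : every X in S is 0
      refine ⟨1, one_pos, fun X hX => ?_⟩
      by_cases hX0 : X = 0
      · subst hX0; norm_num [frob]
      · exfalso
        have hcpos : 0 < frob X := by
          rcases lt_or_eq_of_le (frob_nonneg X) with h | h
          · exact h
          · exact absurd (frob_eq_zero h.symm) hX0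
        refine hne ⟨(frob X)⁻¹ • X, ⟨smul_mem_colSparse hX.1, smul_mem_rowSparse hX.2⟩, ?_⟩
        simp only [Set.mem_setOf_eq, frob_smul, abs_inv, abs_of_pos hcpos]
        field_simp
  obtain ⟨δ, hδpos, hkey⟩ := key
  have hC0 : 0 ≤ 2 * frob Y / δ := div_nonneg (by linarith [frob_nonneg Y]) hδpos.le
  refine ⟨2 * frob Y / δ + 1, by linarith, fun X hX hmin => ?_⟩
  have h1 : frob (Y - Φ * X) ≤ frob Y := by
    have := hmin 0 hzero
    simpa using this
  have h2 : frob (Φ * X) ≤ 2 * frob Y := by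
    have : frob (Φ * X - 0) ≤ frob (Φ * X - Y) + frob (Y - 0) := frob_sub_le _ _ _
    have heq : frob (Φ * X - Y) = frob (Y - Φ * X) := by
      rw [frob_eq_norm, frob_eq_norm, map_sub, map_sub, norm_sub_rev]
    rw [sub_zero, sub_zero, heq] at this
    linarith
  have h3 := hkey X hX
  have h4 : frob X ≤ 2 * frob Y / δ := (le_div_iff₀ hδpos).mpr (by linarith [mul_comm δ (frob X)])
  linarith
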